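/- Let P → Q be a Kummer-type homomorphism of fs monoids and let G = Spec(Z[Q^gp/P^gp]) be the diagonalizable group scheme on the finite abelian group Q^gp/P^gp. Then for any ring A with P → A, the map A ⊗_{Z[P]} Z[Q] → A ⊗_{Z[P]} Z[Q] ⊗_Z Z[Q^gp/P^gp] given by 1⊗a ↦ 1⊗a⊗(a mod P^gp), together with the inclusion, realizes G × X ≅ X ×_Y X where the fiber product of monoid algebras is taken through the saturated pushout Q ⊕_P Q followed by saturation; concretely, the saturation of the pushout of Q ← P → Q in integral monoids is isomorphic to Q ⊕ (Q^gp/P^gp) via (a, b) ↦ (ab, b mod P^gp). -/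
import Mathlib


/-- `ι : P →* G` realizes `G` as the group hull (Grothendieck group) `P^gp` of `P`. -/
def IsGp {P G : Type} [CommMonoid P] [CommGroup G] (ι : P →* G) : Prop :=
  (∀ x : G, ∃ a b : P, x = ι a * (ι b)⁻¹) ∧
    (∀ a b : P, ι a = ι b ↔ ∃ c : P, a * c = b * c)

/-- `P` is saturated via `ι : P → P^gp`. -/
def IsSaturatedVia {P G : Type} [CommMonoid P] [CommGroup G] (ι : P →* G) : Prop :=
  Function.Injective ι ∧
    ∀ x : G, (∃ n : ℕ, 1 ≤ n ∧ x ^ n ∈ Set.range ι) → x ∈ Set.range ι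

/-- `P` is fs: finitely generated and saturated. -/
def IsFsVia {P G : Type} [CommMonoid P] [CommGroup G] (ι : P →* G) : Prop :=
  Monoid.FG P ∧ IsSaturatedVia ι

/-- `h : P → Q` is of Kummer type. -/
def IsKummer {P Q : Type} [CommMonoid P] [CommMonoid Q] (h : P →* Q) : Prop :=
  Function.Injective h ∧ ∀ a : Q, ∃ n : ℕ, 1 ≤ n ∧ a ^ n ∈ Set.range h

/-- Let `P → Q` be a Kummer-type homomorphism of fs monoids, `g : P^gp → Q^gp` the induced map
and `C = Q^gp/P^gp` (a finite abelian group).  The saturated pushout of `Q ← P → Q` is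
isomorphic to `Q ⊕ C` via `(a, b) ↦ (ab, b mod P^gp)`.  Concretely:
(a) the finiteness of `C`; (b) the map `Q × Q → Q × C`, `(a,b) ↦ (ab, b̄)`, is a monoid
homomorphism; (c) `Q × C` is saturated over its image: every element of `Q × C` has a positive
power in the image; and (d) at the level of group hulls, the pushout
`(Q^gp × Q^gp)/P^gp` (quotient by the antidiagonal copy `x ↦ (g x, (g x)⁻¹)` of `P^gp`) is
isomorphic to `Q^gp × C` via `(x, y) ↦ (xy, ȳ)`. -/
theorem stmt_11 (P Q G G' : Type) [CommMonoid P] [CommMonoid Q] [CommGroup G] [CommGroup G']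
    (ιP : P →* G) (ιQ : Q →* G') (hgpP : IsGp ιP) (hgpQ : IsGp ιQ)
    (hP : IsFsVia ιP) (hQ : IsFsVia ιQ)
    (h : P →* Q) (hK : IsKummer h)
    (g : G →* G') (hg : g.comp ιP = ιQ.comp h) :
    Finite (G' ⧸ g.range) ∧
    (∃ ψ : Q × Q →* Q × (G' ⧸ g.range),
      ∀ a b : Q, ψ (a, b) = (a * b, (QuotientGroup.mk (ιQ b) : G' ⧸ g.range))) ∧
    (∀ y : Q × (G' ⧸ g.range), ∃ n : ℕ, 1 ≤ n ∧
      y ^ n ∈ Set.range (fun ab : Q × Q =>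
        ((ab.1 * ab.2, (QuotientGroup.mk (ιQ ab.2) : G' ⧸ g.range)) :
          Q × (G' ⧸ g.range)))) ∧
    (∃ e : ((G' × G') ⧸ (MonoidHom.prod g g⁻¹).range) ≃* (G' × (G' ⧸ g.range)),
      ∀ x y : G', e (QuotientGroup.mk (x, y)) =
        (x * y, (QuotientGroup.mk y : G' ⧸ g.range))) := by
    classical
  -- G' is a finitely generated group
  have hQfg : Monoid.FG Q := hQ.1
  obtain ⟨S, hS⟩ := hQfg.1
  have hG'fg : Group.FG G' := by
    refine ⟨⟨S.image ιQ, ?_⟩⟩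
    rw [eq_top_iff]
    intro x _
    obtain ⟨a, b, rfl⟩ := hgpQ.1 x
    have hrange : ∀ q : Q, ιQ q ∈ Subgroup.closure (↑(S.image ιQ) : Set G') := by
      intro q
      have hq : q ∈ Submonoid.closure (S : Set Q) := by rw [hS]; trivial
      refine Submonoid.closure_induction (fun y hy => ?_) ?_ (fun y z _ _ hy hz => ?_) hq
      · exact Subgroup.subset_closure (by simp; exact ⟨y, hy, rfl⟩)
      · rw [map_one]; exact one_mem _
      · rw [map_mul]; exact mul_mem hy hz
    exact mul_mem (hrange a) (inv_mem (hrange b))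
  -- every element of G' has a positive power in the range of g
  have key : ∀ x : G', ∃ n : ℕ, 1 ≤ n ∧ x ^ n ∈ g.range := by
    intro x
    obtain ⟨a, b, rfl⟩ := hgpQ.1 x
    obtain ⟨n, hn, p, hp⟩ := hK.2 a
    obtain ⟨m, hm, p', hp'⟩ := hK.2 b
    refine ⟨n * m, Nat.one_le_iff_ne_zero.2 (by positivity), ?_⟩
    have e1 : ιQ a ^ n = g (ιP p) := by
      rw [← map_pow, ← hp, ← MonoidHom.comp_apply, ← hg]; rfl
    have e2 : ιQ b ^ m = g (ιP p') := by
      rw [← map_pow, ← hp', ← MonoidHom.comp_apply, ← hg]; rfl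
    have : (ιQ a * (ιQ b)⁻¹) ^ (n * m) = g (ιP p ^ m * (ιP p' ^ n)⁻¹) := by
      rw [map_mul, map_inv, map_pow, map_pow, ← e1, ← e2, mul_pow, ← pow_mul, ← pow_mul,
        inv_pow, Nat.mul_comm m n]
    rw [this]
    exact ⟨_, rfl⟩
  -- (a) finiteness
  have hfin : Finite (G' ⧸ g.range) := by
    have : Group.FG (G' ⧸ g.range) := Group.fg_of_surjective (QuotientGroup.mk'_surjective g.range)
    refine CommGroup.finite_of_fg_torsion _ (fun c => ?_)
    obtain ⟨x, rfl⟩ := QuotientGroup.mk'_surjective g.range c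
    obtain ⟨n, hn, hx⟩ := key x
    refine isOfFinOrder_iff_pow_eq_one.2 ⟨n, hn, ?_⟩
    rw [← map_pow]
    exact (QuotientGroup.eq_one_iff _).2 hx
  refine ⟨hfin, ?_, ?_, ?_⟩
  -- (b) the monoid hom ψ
  · exact ⟨(MonoidHom.fst Q Q * MonoidHom.snd Q Q).prod
      (((QuotientGroup.mk' g.range).comp ιQ).comp (MonoidHom.snd Q Q)),
      fun a b => rfl⟩
  -- (c) saturation over the image
  · rintro ⟨q, c⟩
    refine ⟨Nat.card (G' ⧸ g.range), Nat.one_le_iff_ne_zero.2 Nat.card_pos.ne', ?_⟩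
    refine ⟨(q ^ Nat.card (G' ⧸ g.range), 1), ?_⟩
    simp [Prod.pow_mk, pow_card_eq_one', Prod.ext_iff]
  -- (d) the group isomorphism
  · set φ : G' × G' →* G' × (G' ⧸ g.range) :=
      (MonoidHom.fst G' G' * MonoidHom.snd G' G').prod
        ((QuotientGroup.mk' g.range).comp (MonoidHom.snd G' G')) with hφ
    have hφ_apply : ∀ x y : G', φ (x, y) = (x * y, QuotientGroup.mk y) := fun x y => rfl
    have hker : (MonoidHom.prod g g⁻¹).range ≤ φ.ker := by
      rintro ⟨x, y⟩ ⟨p, hp⟩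
      have hx : x = g p := congrArg Prod.fst hp.symm
      have hy : y = (g p)⁻¹ := congrArg Prod.snd hp.symm
      subst hx; subst hy
      show φ (g p, (g p)⁻¹) = 1
      rw [hφ_apply]
      exact Prod.ext (by simp) ((QuotientGroup.eq_one_iff _).2 ⟨p⁻¹, by simp⟩)
    set f : ((G' × G') ⧸ (MonoidHom.prod g g⁻¹).range) →* G' × (G' ⧸ g.range) :=
      QuotientGroup.lift _ φ hker with hf
    have hf_mk : ∀ x y : G', f (QuotientGroup.mk (x, y)) = (x * y, QuotientGroup.mk y) :=
      fun x y => rfl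
    have hsurj : Function.Surjective f := by
      rintro ⟨z, c⟩
      obtain ⟨y, rfl⟩ := QuotientGroup.mk'_surjective g.range c
      exact ⟨QuotientGroup.mk (z * y⁻¹, y), by simp [hf_mk]⟩
    have hinj : Function.Injective f := by
      rw [injective_iff_map_eq_one]
      intro a ha
      obtain ⟨⟨x, y⟩, rfl⟩ := QuotientGroup.mk'_surjective _ a
      have h1 : x * y = 1 := congrArg Prod.fst ha
      have h2 : (QuotientGroup.mk y : G' ⧸ g.range) = 1 := congrArg Prod.snd ha
      obtain ⟨p, hp⟩ := (QuotientGroup.eq_one_iff _).1 h2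
      have : (x, y) ∈ (MonoidHom.prod g g⁻¹).range := by
        have hxy : x = y⁻¹ := eq_inv_of_mul_eq_one_left h1
        refine ⟨p⁻¹, Prod.ext ?_ ?_⟩
        · show g p⁻¹ = x
          rw [map_inv, hp, hxy]
        · show (g p⁻¹)⁻¹ = y
          rw [map_inv, hp, inv_inv]
      exact (QuotientGroup.eq_one_iff _).2 this
    exact ⟨MulEquiv.ofBijective f ⟨hinj, hsurj⟩, fun x y => hf_mk x y⟩
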